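/- arXiv:1908.09078 — 2 statements merged into one kernel-verified Lean document; each statement's English description precedes it below -/
import Mathlib

section
/- Let A : ℝ^{m×n} → ℝ^p be a linear map, let M ∈ ℝ^{m×n} have rank r ≥ 1 with σ_i = σ_i(M), set f(X) = (1/2)‖A(X) − A(M)‖², let ν, μ > 0 and κ a positive integer, and let Ψ(U,V) = ν f(UVᵀ) + (μ/4)‖UᵀU − VᵀV‖_F² + (1/2)(‖U‖_{2,0} + ‖V‖_{2,0}). Suppose 𝒳* ∩ Ω_κ ≠ ∅ and that α = λ_{2r,min}(A*A) satisfies α > 2/(ν σ_r²). Fix (Ū,V̄) ∈ 𝒲*. Then for every (U,V) ∈ ℝ^{m×κ}×ℝ^{n×κ} with √(‖U−Ū‖_F² + ‖V−V̄‖_F²) < √σ_r/4 and 0 < Ψ(U,V) − Ψ(Ū,V̄) < 1/2, the four sets of nonzero column indices coincide: {j : Ū_j ≠ 0} = {j : V̄_j ≠ 0} = {j : U_j ≠ 0} = {j : V_j ≠ 0}. -/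
open scoped BigOperators

noncomputable section

set_option maxHeartbeats 1000000

namespace Paper

open Matrix

/-- Euclidean dot product on `ℝ^p`. -/
def vdot {p : ℕ} (y z : Fin p → ℝ) : ℝ := ∑ i, y i * z i

/-- Euclidean norm on `ℝ^p`. -/
def vnorm {p : ℕ} (y : Fin p → ℝ) : ℝ := Real.sqrt (∑ i, (y i) ^ 2)

/-- Trace (Frobenius) inner product of matrices. -/
def finner {m n : ℕ} (X Y : Matrix (Fin m) (Fin n) ℝ) : ℝ := ∑ i, ∑ j, X i j * Y i j

/-- Frobenius norm of a matrix. -/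
def fnorm {m n : ℕ} (X : Matrix (Fin m) (Fin n) ℝ) : ℝ := Real.sqrt (∑ i, ∑ j, (X i j) ^ 2)

/-- Euclidean norm of the `j`-th column of a matrix. -/
def colNorm {m k : ℕ} (U : Matrix (Fin m) (Fin k) ℝ) (j : Fin k) : ℝ :=
  Real.sqrt (∑ i, (U i j) ^ 2)

/-- The `ℓ_{2,0}` norm of a matrix: the number of nonzero columns. -/
def l20 {m k : ℕ} (U : Matrix (Fin m) (Fin k) ℝ) : ℕ :=
  Set.ncard {j : Fin k | (fun i => U i j) ≠ 0}

/-- Number of nonzero entries of a vector. -/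
def zeroNorm {k : ℕ} (z : Fin k → ℝ) : ℕ := Set.ncard {i : Fin k | z i ≠ 0}

/-- `k`-restricted smallest eigenvalue of `A*A`. -/
def lamMin {m n p : ℕ} (A : Matrix (Fin m) (Fin n) ℝ →ₗ[ℝ] (Fin p → ℝ)) (k : ℕ) : ℝ :=
  sInf {t : ℝ | ∃ X : Matrix (Fin m) (Fin n) ℝ, X.rank ≤ k ∧ fnorm X = 1 ∧ t = (vnorm (A X)) ^ 2}

/-- `k`-restricted largest eigenvalue of `A*A`. -/
def lamMax {m n p : ℕ} (A : Matrix (Fin m) (Fin n) ℝ →ₗ[ℝ] (Fin p → ℝ)) (k : ℕ) : ℝ :=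
  sSup {t : ℝ | ∃ X : Matrix (Fin m) (Fin n) ℝ, X.rank ≤ k ∧ fnorm X = 1 ∧ t = (vnorm (A X)) ^ 2}

/-- Operator (spectral) norm of the sampling operator. -/
def opNorm {m n p : ℕ} (A : Matrix (Fin m) (Fin n) ℝ →ₗ[ℝ] (Fin p → ℝ)) : ℝ :=
  sSup {t : ℝ | ∃ X : Matrix (Fin m) (Fin n) ℝ, fnorm X = 1 ∧ t = vnorm (A X)}

/-- Spectral norm of a matrix. -/
def specNorm {a b : ℕ} (U : Matrix (Fin a) (Fin b) ℝ) : ℝ :=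
  sSup {t : ℝ | ∃ x : Fin b → ℝ, vnorm x = 1 ∧ t = vnorm (U.mulVec x)}

/-- Adjoint of `A` w.r.t. the trace inner product, applied to `y`. -/
def adjApply {m n p : ℕ} (A : Matrix (Fin m) (Fin n) ℝ →ₗ[ℝ] (Fin p → ℝ))
    (y : Fin p → ℝ) : Matrix (Fin m) (Fin n) ℝ :=
  fun i j => vdot (A (Matrix.single i j 1)) y

/-- `A*A` applied to a matrix. -/
def AstarA {m n p : ℕ} (A : Matrix (Fin m) (Fin n) ℝ →ₗ[ℝ] (Fin p → ℝ))
    (X : Matrix (Fin m) (Fin n) ℝ) : Matrix (Fin m) (Fin n) ℝ :=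
  adjApply A (A X)

/-- Singular values of `X` arranged nonincreasingly, `sigmaFin X 0` the largest. -/
def sigmaFin {m n : ℕ} (X : Matrix (Fin m) (Fin n) ℝ) : Fin m → ℝ := fun j =>
  Real.sqrt ((Matrix.isHermitian_mul_conjTranspose_self X).eigenvalues
    ((Tuple.sort (Matrix.isHermitian_mul_conjTranspose_self X).eigenvalues) j.rev))

/-- The `i`-th largest singular value (1-indexed); `0` for out-of-range indices. -/
def singularValue {m n : ℕ} (i : ℕ) (X : Matrix (Fin m) (Fin n) ℝ) : ℝ :=
  if h : 1 ≤ i ∧ i ≤ m then sigmaFin X ⟨i - 1, by omega⟩ else 0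

/-- The family `𝓛` of proper lsc convex functions `φ : ℝ → (−∞,∞]` with
`[0,1] ⊆ int(dom φ)`, `φ(1) = 1` and `min_{t ∈ [0,1]} φ(t) = 0` attained at `t*`. -/
structure LFamily where
  phi : ℝ → EReal
  lsc : LowerSemicontinuous phi
  convex : ∀ x y a b : ℝ, 0 ≤ a → 0 ≤ b → a + b = 1 →
    phi (a * x + b * y) ≤ (a : EReal) * phi x + (b : EReal) * phi y
  ne_bot : ∀ x, phi x ≠ ⊥
  icc_subset_interior_dom : Set.Icc (0 : ℝ) 1 ⊆ interior {t : ℝ | phi t ≠ ⊤}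
  phi_one : phi 1 = 1
  tstar : ℝ
  tstar_mem : tstar ∈ Set.Icc (0 : ℝ) 1
  phi_tstar : phi tstar = 0
  phi_nonneg : ∀ t ∈ Set.Icc (0 : ℝ) 1, 0 ≤ phi t

/-- Left derivative of `φ` at `1`, as the supremum of difference quotients. -/
def leftDerivOne (L : LFamily) : ℝ :=
  sSup {q : ℝ | ∃ t : ℝ, 0 ≤ t ∧ t < 1 ∧ q = (1 - (L.phi t).toReal) / (1 - t)}

/-- The function `ψ`: equal to `φ` on `[0,1]` and `+∞` elsewhere. -/
def psi (L : LFamily) (t : ℝ) : EReal := if t ∈ Set.Icc (0 : ℝ) 1 then L.phi t else ⊤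

/-- The conjugate `ψ*` of `ψ`. -/
def psiStar (L : LFamily) (s : ℝ) : EReal := ⨆ t : ℝ, ((s * t : ℝ) : EReal) - psi L t


/-- The objective `Ψ` of the `ℓ_{2,0}`-regularized balanced factorization. -/
def Psi {m n κ : ℕ} (f : Matrix (Fin m) (Fin n) ℝ → ℝ) (ν μ : ℝ)
    (U : Matrix (Fin m) (Fin κ) ℝ) (V : Matrix (Fin n) (Fin κ) ℝ) : ℝ :=
  ν * f (U * Vᵀ) + (μ / 4) * (fnorm (Uᵀ * U - Vᵀ * V)) ^ 2 +
    (1 / 2) * ((l20 U : ℝ) + (l20 V : ℝ))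



lemma sumsq_nonneg {q : ℕ} (y : Fin q → ℝ) : 0 ≤ ∑ i, (y i)^2 :=
  Finset.sum_nonneg fun _ _ => sq_nonneg _

lemma sumsq_eq_zero_iff {q : ℕ} (y : Fin q → ℝ) : (∑ i, (y i)^2 = 0) ↔ y = 0 := by
  rw [Finset.sum_eq_zero_iff_of_nonneg (fun i _ => sq_nonneg (y i))]
  constructor
  · intro h; funext i; simpa [pow_eq_zero_iff] using h i (Finset.mem_univ i)
  · intro h i _; simp [h]

lemma vnorm_nonneg {q : ℕ} (y : Fin q → ℝ) : 0 ≤ vnorm y := Real.sqrt_nonneg _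

lemma vnorm_sq {q : ℕ} (y : Fin q → ℝ) : vnorm y ^ 2 = ∑ i, (y i)^2 :=
  Real.sq_sqrt (sumsq_nonneg y)

lemma vnorm_eq_zero_iff {q : ℕ} (y : Fin q → ℝ) : vnorm y = 0 ↔ y = 0 := by
  rw [vnorm, Real.sqrt_eq_zero (sumsq_nonneg y), sumsq_eq_zero_iff]

lemma vnorm_smul {q : ℕ} (c : ℝ) (y : Fin q → ℝ) : vnorm (c • y) = |c| * vnorm y := by
  rw [vnorm, vnorm, ← Real.sqrt_sq_eq_abs, ← Real.sqrt_mul (sq_nonneg c), Finset.mul_sum]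
  congr 1; apply Finset.sum_congr rfl; intro i _; simp [mul_pow]

lemma fnorm_nonneg {m n : ℕ} (X : Matrix (Fin m) (Fin n) ℝ) : 0 ≤ fnorm X := Real.sqrt_nonneg _

lemma fnorm_sq {m n : ℕ} (X : Matrix (Fin m) (Fin n) ℝ) : fnorm X ^ 2 = ∑ i, ∑ j, (X i j)^2 :=
  Real.sq_sqrt (Finset.sum_nonneg fun _ _ => sumsq_nonneg _)

lemma fnorm_eq_zero_iff {m n : ℕ} (X : Matrix (Fin m) (Fin n) ℝ) : fnorm X = 0 ↔ X = 0 := by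
  rw [fnorm, Real.sqrt_eq_zero (Finset.sum_nonneg fun i _ => sumsq_nonneg (fun j => X i j))]
  rw [Finset.sum_eq_zero_iff_of_nonneg (fun i _ => sumsq_nonneg (fun j => X i j))]
  constructor
  · intro h; ext i j
    have := (sumsq_eq_zero_iff (fun j => X i j)).1 (h i (Finset.mem_univ i))
    exact congrFun this j
  · intro h i _; rw [(sumsq_eq_zero_iff _)]; funext j; simp [h]

lemma fnorm_smul {m n : ℕ} (c : ℝ) (X : Matrix (Fin m) (Fin n) ℝ) :
    fnorm (c • X) = |c| * fnorm X := by
  rw [fnorm, fnorm, ← Real.sqrt_sq_eq_abs, ← Real.sqrt_mul (sq_nonneg c), Finset.mul_sum]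
  congr 1; apply Finset.sum_congr rfl; intro i _
  rw [Finset.mul_sum]; apply Finset.sum_congr rfl; intro j _
  simp [mul_pow]

lemma colsq_le_fnorm_sq {m n : ℕ} (X : Matrix (Fin m) (Fin n) ℝ) (j : Fin n) :
    ∑ i, (X i j)^2 ≤ fnorm X ^ 2 := by
  rw [fnorm_sq, Finset.sum_comm]
  exact Finset.single_le_sum (f := fun j' => ∑ i, (X i j')^2)
    (fun j' _ => sumsq_nonneg _) (Finset.mem_univ j)

-- dot product helper
lemma dot_mulVec_eq {m n : ℕ} (M : Matrix (Fin m) (Fin n) ℝ) (x : Fin m → ℝ) (y : Fin n → ℝ) :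
    ∑ i, x i * (M.mulVec y) i = ∑ j, (Mᵀ.mulVec x) j * y j := by
  simp only [Matrix.mulVec, dotProduct, Finset.mul_sum, Finset.sum_mul,
    Matrix.transpose_apply]
  rw [Finset.sum_comm]
  apply Finset.sum_congr rfl; intro j _; apply Finset.sum_congr rfl; intro i _; ring

lemma dot_MtM {m n : ℕ} (M : Matrix (Fin m) (Fin n) ℝ) (v : Fin n → ℝ) :
    ∑ j, v j * ((Mᵀ * M).mulVec v) j = ∑ i, ((M.mulVec v) i)^2 := by
  rw [← Matrix.mulVec_mulVec]
  rw [show (Mᵀ.mulVec (M.mulVec v)) = ((Mᵀ).mulVec (M.mulVec v)) from rfl]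
  have := dot_mulVec_eq Mᵀ v (M.mulVec v)
  simp only [Matrix.transpose_transpose] at this
  rw [this]
  apply Finset.sum_congr rfl; intro i _; ring




lemma rank_smul_le {m n : ℕ} (c : ℝ) (X : Matrix (Fin m) (Fin n) ℝ) :
    (c • X).rank ≤ X.rank := by
  apply Submodule.finrank_mono
  rintro z ⟨v, rfl⟩
  exact ⟨c • v, by simp [Matrix.mulVecLin_apply, Matrix.mulVec_smul, Matrix.smul_mulVec]⟩

lemma rank_sub_le {m n : ℕ} (X Y : Matrix (Fin m) (Fin n) ℝ) :
    (X - Y).rank ≤ X.rank + Y.rank := by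
  have h1 : LinearMap.range (X - Y).mulVecLin ≤
      LinearMap.range X.mulVecLin ⊔ LinearMap.range Y.mulVecLin := by
    rintro z ⟨v, rfl⟩
    have : (X - Y).mulVecLin v = X.mulVecLin v - Y.mulVecLin v := by
      simp [Matrix.mulVecLin_apply, Matrix.sub_mulVec]
    rw [this]
    exact Submodule.sub_mem_sup ⟨v, rfl⟩ ⟨v, rfl⟩
  calc (X - Y).rank ≤ Module.finrank ℝ
        ↥(LinearMap.range X.mulVecLin ⊔ LinearMap.range Y.mulVecLin) :=
        Submodule.finrank_mono h1
    _ ≤ X.rank + Y.rank := by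
        have := Submodule.finrank_sup_add_finrank_inf_eq
          (LinearMap.range X.mulVecLin) (LinearMap.range Y.mulVecLin)
        unfold Matrix.rank
        omega

lemma lamMin_mul_le {m n p : ℕ} (A : Matrix (Fin m) (Fin n) ℝ →ₗ[ℝ] (Fin p → ℝ)) (k : ℕ)
    (X : Matrix (Fin m) (Fin n) ℝ) (hrk : X.rank ≤ k) :
    lamMin A k * fnorm X ^ 2 ≤ vnorm (A X) ^ 2 := by
  rcases eq_or_ne X 0 with rfl | hX
  · simp [(fnorm_eq_zero_iff (0 : Matrix (Fin m) (Fin n) ℝ)).2 rfl]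
    positivity
  · set c := fnorm X with hc
    have hc0 : 0 < c := lt_of_le_of_ne (fnorm_nonneg X) (fun h => hX ((fnorm_eq_zero_iff X).1 h.symm))
    have hmem : vnorm (A (c⁻¹ • X)) ^ 2 ∈
        {t : ℝ | ∃ Z : Matrix (Fin m) (Fin n) ℝ, Z.rank ≤ k ∧ fnorm Z = 1 ∧ t = (vnorm (A Z)) ^ 2} := by
      refine ⟨c⁻¹ • X, le_trans (rank_smul_le _ _) hrk, ?_, rfl⟩
      rw [fnorm_smul, abs_of_pos (by positivity), inv_mul_cancel₀ (ne_of_gt hc0)]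
    have hbdd : BddBelow {t : ℝ | ∃ Z : Matrix (Fin m) (Fin n) ℝ, Z.rank ≤ k ∧ fnorm Z = 1 ∧ t = (vnorm (A Z)) ^ 2} := by
      refine ⟨0, ?_⟩; rintro t ⟨Z, _, _, rfl⟩; positivity
    have hle : lamMin A k ≤ vnorm (A (c⁻¹ • X)) ^ 2 := csInf_le hbdd hmem
    have hAx : vnorm (A (c⁻¹ • X)) = c⁻¹ * vnorm (A X) := by
      rw [_root_.map_smul A, vnorm_smul, abs_of_pos (by positivity)]
    rw [hAx, mul_pow] at hle
    have h2 : lamMin A k * c ^ 2 ≤ (c⁻¹ ^ 2 * vnorm (A X) ^ 2) * c ^ 2 :=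
      mul_le_mul_of_nonneg_right hle (by positivity)
    calc lamMin A k * c ^ 2 ≤ (c⁻¹ ^ 2 * vnorm (A X) ^ 2) * c ^ 2 := h2
      _ = vnorm (A X) ^ 2 := by field_simp




lemma euc_inner_eq {q : ℕ} (v w : EuclideanSpace ℝ (Fin q)) :
    (inner ℝ v w : ℝ) = ∑ l, v l * w l := by
  rw [PiLp.inner_apply]; simp [RCLike.inner_apply]; exact Finset.sum_congr rfl fun _ _ => mul_comm _ _

lemma euc_repr_eq {q : ℕ} (b : OrthonormalBasis (Fin q) ℝ (EuclideanSpace ℝ (Fin q)))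
    (v : EuclideanSpace ℝ (Fin q)) (i : Fin q) :
    b.repr v i = ∑ l, (b i) l * v l := by
  rw [b.repr_apply_apply, euc_inner_eq]

lemma euc_parseval {q : ℕ} (b : OrthonormalBasis (Fin q) ℝ (EuclideanSpace ℝ (Fin q)))
    (v w : EuclideanSpace ℝ (Fin q)) :
    ∑ l, v l * w l = ∑ i, b.repr v i * b.repr w i := by
  rw [← euc_inner_eq, ← b.repr.inner_map_map v w, PiLp.inner_apply]
  simp [RCLike.inner_apply]; exact Finset.sum_congr rfl fun _ _ => mul_comm _ _

lemma eig_dot {q : ℕ} (S : Matrix (Fin q) (Fin q) ℝ) (hS : S.IsHermitian) (i : Fin q)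
    (x : Fin q → ℝ) :
    ∑ l, (hS.eigenvectorBasis i) l * (S.mulVec x) l
      = hS.eigenvalues i * ∑ l, (hS.eigenvectorBasis i) l * x l := by
  have hST : Sᵀ = S := by
    have := hS.eq
    rwa [Matrix.conjTranspose_eq_transpose_of_trivial] at this
  have hsym : ∀ a c, S a c = S c a := fun a c => congrFun (congrFun hST c) a
  have h2 : ∀ l, (S.mulVec (fun t => (hS.eigenvectorBasis i) t)) l
      = hS.eigenvalues i * (hS.eigenvectorBasis i) l := by
    intro l
    exact congrFun (hS.mulVec_eigenvectorBasis i) l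
  have h1 : ∑ l, (hS.eigenvectorBasis i) l * (S.mulVec x) l
      = ∑ l, (S.mulVec (fun t => (hS.eigenvectorBasis i) t)) l * x l := by
    simp only [Matrix.mulVec, dotProduct, Finset.mul_sum, Finset.sum_mul]
    rw [Finset.sum_comm]
    apply Finset.sum_congr rfl; intro l _; apply Finset.sum_congr rfl; intro l' _
    rw [hsym l' l]; ring
  rw [h1]
  simp only [h2]
  rw [Finset.mul_sum]
  apply Finset.sum_congr rfl; intro l _; ring

lemma exists_eig_index {q : ℕ} (S : Matrix (Fin q) (Fin q) ℝ) (hS : S.IsHermitian)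
    (u : Fin q → ℝ) (hu : u ≠ 0) (μ : ℝ) (heq : S.mulVec u = μ • u) :
    ∃ i, hS.eigenvalues i = μ := by
  by_contra hcon
  push_neg at hcon
  have hci : ∀ i, hS.eigenvalues i * (∑ l, (hS.eigenvectorBasis i) l * u l)
      = μ * (∑ l, (hS.eigenvectorBasis i) l * u l) := by
    intro i
    rw [← eig_dot S hS i u, heq]
    rw [Finset.mul_sum]
    apply Finset.sum_congr rfl; intro l _
    simp [Pi.smul_apply]; ring
  have hc0 : ∀ i, (∑ l, (hS.eigenvectorBasis i) l * u l) = 0 := by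
    intro i
    by_contra h4
    exact hcon i (mul_right_cancel₀ h4 (hci i))
  have hrepr : (hS.eigenvectorBasis).repr (WithLp.toLp 2 u) = 0 := by
    ext i
    rw [euc_repr_eq]
    exact hc0 i
  have : (WithLp.toLp 2 u) = 0 := by
    simpa using congrArg (hS.eigenvectorBasis).repr.symm hrepr
  exact hu (by simpa using congrArg WithLp.ofLp this)

lemma quadform_lower {q : ℕ} (S : Matrix (Fin q) (Fin q) ℝ) (hS : S.IsHermitian) (s : ℝ)
    (hnn : ∀ i, 0 ≤ hS.eigenvalues i)
    (hlow : ∀ i, hS.eigenvalues i ≠ 0 → s ≤ hS.eigenvalues i)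
    (x : Fin q → ℝ)
    (hx0 : ∀ i, hS.eigenvalues i = 0 → ∑ l, (hS.eigenvectorBasis i) l * x l = 0) :
    s * ∑ l, (x l)^2 ≤ ∑ l, x l * (S.mulVec x) l := by
  set b := hS.eigenvectorBasis with hb
  have hc : ∀ i, b.repr (WithLp.toLp 2 x) i = ∑ l, (b i) l * x l :=
    fun i => euc_repr_eq b (WithLp.toLp 2 x) i
  have hcy : ∀ i, b.repr (WithLp.toLp 2 (S.mulVec x)) i
      = hS.eigenvalues i * ∑ l, (b i) l * x l := by
    intro i
    rw [euc_repr_eq]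
    exact eig_dot S hS i x
  have hLHS : ∑ l, (x l)^2 = ∑ i, (∑ l, (b i) l * x l)^2 := by
    have h := euc_parseval b (WithLp.toLp 2 x) (WithLp.toLp 2 x)
    simp only [hc, WithLp.ofLp_toLp] at h
    calc ∑ l, (x l)^2 = ∑ l, x l * x l := by
          apply Finset.sum_congr rfl; intro l _; ring
      _ = ∑ i, (∑ l, (b i) l * x l)^2 := by
          rw [h]; apply Finset.sum_congr rfl; intro i _; ring
  have hRHS : ∑ l, x l * (S.mulVec x) l
      = ∑ i, hS.eigenvalues i * (∑ l, (b i) l * x l)^2 := by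
    have h := euc_parseval b (WithLp.toLp 2 x)
      (WithLp.toLp 2 (S.mulVec x))
    simp only [hc, hcy, WithLp.ofLp_toLp] at h
    rw [h]
    apply Finset.sum_congr rfl; intro i _; ring
  rw [hLHS, hRHS, Finset.mul_sum]
  apply Finset.sum_le_sum
  intro i _
  rcases eq_or_ne (hS.eigenvalues i) 0 with h0 | h0
  · rw [hx0 i h0]
    simp [h0]
  · exact mul_le_mul_of_nonneg_right (hlow i h0) (sq_nonneg _)




lemma singularValue_key {m n r : ℕ} (M : Matrix (Fin m) (Fin n) ℝ)
    (hr : M.rank = r) (hr1 : 1 ≤ r) :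
    0 < (singularValue r M)^2 ∧
      (∀ i, (Matrix.isHermitian_mul_conjTranspose_self M).eigenvalues i ≠ 0 →
        (singularValue r M)^2 ≤ (Matrix.isHermitian_mul_conjTranspose_self M).eigenvalues i) := by
  classical
  set hS := Matrix.isHermitian_mul_conjTranspose_self M with hhS
  set ev := hS.eigenvalues with hev
  have hrm : r ≤ m := by
    have := M.rank_le_card_height
    simp only [Fintype.card_fin] at this
    omega
  have hm0 : 0 < m := by omega
  -- eigenvalues nonneg
  have hnn : ∀ i, 0 ≤ ev i :=
    fun i => (Matrix.posSemidef_self_mul_conjTranspose M).eigenvalues_nonneg i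
  -- number of nonzero eigenvalues
  have hcard : Fintype.card {i // ev i ≠ 0} = r := by
    rw [← hS.rank_eq_card_non_zero_eigs, Matrix.rank_self_mul_conjTranspose, hr]
  set g : Fin m → ℝ := ev ∘ Tuple.sort ev with hg
  have hmono : Monotone g := Tuple.monotone_sort ev
  have hgnn : ∀ j, 0 ≤ g j := fun j => hnn _
  set N : Finset (Fin m) := Finset.univ.filter (fun j => g j ≠ 0) with hN
  have hNcard : N.card = r := by
    rw [← hcard]
    rw [Fintype.card_subtype]
    apply Finset.card_bij (fun j _ => Tuple.sort ev j)
    · intro a ha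
      simp only [hN, Finset.mem_filter, Finset.mem_univ, true_and] at ha ⊢
      exact ha
    · intro a _ b _ hab
      exact (Tuple.sort ev).injective hab
    · intro b hb
      refine ⟨(Tuple.sort ev).symm b, ?_, by simp⟩
      simp only [hN, Finset.mem_filter, Finset.mem_univ, true_and, hg, Function.comp_apply,
        Equiv.apply_symm_apply]
      simpa using hb
  set j0 : Fin m := ⟨m - r, by omega⟩ with hj0
  -- positivity at sorted position m - r
  have hpos : 0 < g j0 := by
    rcases lt_or_ge 0 (g j0) with h | h
    · exact h
    · exfalso
      have hz : g j0 = 0 := le_antisymm h (hgnn j0)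
      have hsub : N ⊆ Finset.Ioi j0 := by
        intro j hj
        simp only [hN, Finset.mem_filter, Finset.mem_univ, true_and] at hj
        rw [Finset.mem_Ioi]
        by_contra hle
        push_neg at hle
        exact hj (le_antisymm (hz ▸ hmono hle) (hgnn j))
      have := Finset.card_le_card hsub
      rw [hNcard, Fin.card_Ioi] at this
      simp only [hj0] at this
      omega
  -- value of singularValue
  have hsv : (singularValue r M)^2 = g j0 := by
    rw [singularValue, dif_pos ⟨hr1, hrm⟩]
    have hrev : (⟨r - 1, by omega⟩ : Fin m).rev = j0 := by
      ext
      simp [Fin.rev, hj0]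
      omega
    rw [sigmaFin, hrev]
    exact Real.sq_sqrt (hgnn j0)
  constructor
  · rw [hsv]; exact hpos
  · intro i hi
    rw [hsv]
    set j1 := (Tuple.sort ev).symm i with hj1
    have hgj1 : g j1 = ev i := by simp [hg, hj1]
    rcases le_or_gt j0 j1 with h | h
    · rw [← hgj1]; exact hmono h
    · exfalso
      have hsub : Finset.Ici j1 ⊆ N := by
        intro j hj
        rw [Finset.mem_Ici] at hj
        simp only [hN, Finset.mem_filter, Finset.mem_univ, true_and]
        have : g j1 ≤ g j := hmono hj
        have hpos1 : 0 < g j1 := lt_of_le_of_ne (hgnn j1) (by rw [hgj1]; exact Ne.symm hi)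
        exact ne_of_gt (lt_of_lt_of_le hpos1 this)
      have := Finset.card_le_card hsub
      rw [hNcard, Fin.card_Ici] at this
      have hj1lt : (j1 : ℕ) < m - r := h
      omega




lemma fnorm_sq_eq_trace {m n : ℕ} (B : Matrix (Fin m) (Fin n) ℝ) :
    fnorm B ^ 2 = Matrix.trace (Bᵀ * B) := by
  rw [fnorm_sq, Matrix.trace]
  rw [Finset.sum_comm]
  apply Finset.sum_congr rfl; intro j _
  simp [Matrix.diag, Matrix.mul_apply, sq]

lemma trace_transpose_mul_self_nonneg {m n : ℕ} (D : Matrix (Fin m) (Fin n) ℝ) :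
    0 ≤ Matrix.trace (Dᵀ * D) := by
  rw [← fnorm_sq_eq_trace]; positivity

lemma fnorm_mul_orthonormal_le {m n d : ℕ} (B : Matrix (Fin m) (Fin n) ℝ)
    (W : Matrix (Fin n) (Fin d) ℝ) (hW : Wᵀ * W = 1) :
    fnorm (B * W) ^ 2 ≤ fnorm B ^ 2 := by
  have h1 : fnorm (B * W) ^ 2 = Matrix.trace ((Bᵀ * B) * (W * Wᵀ)) := by
    rw [fnorm_sq_eq_trace, Matrix.transpose_mul, Matrix.mul_assoc Wᵀ Bᵀ (B * W),
      ← Matrix.mul_assoc Bᵀ B W, Matrix.trace_mul_comm Wᵀ ((Bᵀ * B) * W), Matrix.mul_assoc]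
  rw [h1, fnorm_sq_eq_trace]
  set C := Bᵀ * B with hC
  set P := W * Wᵀ with hP
  have hPP : P * P = P := by
    rw [hP, Matrix.mul_assoc W Wᵀ (W * Wᵀ), ← Matrix.mul_assoc Wᵀ W Wᵀ, hW, Matrix.one_mul]
  have hPt : Pᵀ = P := by rw [hP, Matrix.transpose_mul, Matrix.transpose_transpose]
  set Q : Matrix (Fin n) (Fin n) ℝ := 1 - P with hQdef
  have hQQ : Q * Q = Q := by
    rw [hQdef, Matrix.sub_mul, Matrix.mul_sub, Matrix.mul_sub, Matrix.one_mul, Matrix.mul_one,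
      hPP]
    simp
  have hQt : Qᵀ = Q := by
    rw [hQdef, Matrix.transpose_sub, Matrix.transpose_one, hPt]
  have key : Matrix.trace ((B * Q)ᵀ * (B * Q)) = Matrix.trace C - Matrix.trace (C * P) := by
    have e1 : (B * Q)ᵀ * (B * Q) = Q * (C * Q) := by
      rw [Matrix.transpose_mul, hQt, Matrix.mul_assoc Q Bᵀ (B * Q), ← Matrix.mul_assoc Bᵀ B Q, hC]
    rw [e1, Matrix.trace_mul_comm Q (C * Q), Matrix.mul_assoc, hQQ, hQdef, Matrix.mul_sub,
      Matrix.mul_one, Matrix.trace_sub]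
  have h2 := trace_transpose_mul_self_nonneg (B * Q)
  rw [key] at h2
  linarith

lemma fnorm_mul_sq_eq_sum_cols {m n d : ℕ} (B : Matrix (Fin m) (Fin n) ℝ)
    (W : Matrix (Fin n) (Fin d) ℝ) :
    fnorm (B * W) ^ 2 = ∑ l, ∑ i, ((B.mulVec (fun j => W j l)) i)^2 := by
  rw [fnorm_sq, Finset.sum_comm]
  apply Finset.sum_congr rfl; intro l _
  apply Finset.sum_congr rfl; intro i _
  simp [Matrix.mul_apply, Matrix.mulVec, dotProduct]




lemma eckart_young {m n r : ℕ} (M Y : Matrix (Fin m) (Fin n) ℝ) (hr : M.rank = r)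
    (s : ℝ) (hs : 0 ≤ s)
    (hlow : ∀ (v : Fin n → ℝ) (μ : ℝ), v ≠ 0 → μ ≠ 0 →
      (Mᵀ * M).mulVec v = μ • v → s ≤ μ)
    (hY : Y.rank < r) :
    ((r : ℝ) - (Y.rank : ℝ)) * s ≤ fnorm (Y - M) ^ 2 := by
  classical
  have hN : (Mᵀ * M).IsHermitian := by
    rw [← Matrix.conjTranspose_eq_transpose_of_trivial M]
    exact Matrix.isHermitian_conjTranspose_mul_self M
  set b := hN.eigenvectorBasis with hb
  set μe := hN.eigenvalues with hμe
  have hpsd : (Mᵀ * M).PosSemidef := by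
    rw [← Matrix.conjTranspose_eq_transpose_of_trivial M]
    exact Matrix.posSemidef_conjTranspose_mul_self M
  have hnn : ∀ i, 0 ≤ μe i := fun i => hpsd.eigenvalues_nonneg i
  have hlowe : ∀ i, μe i ≠ 0 → s ≤ μe i := by
    intro i hi
    apply hlow (fun l => (b i) l) (μe i) ?_ hi ?_
    · intro hf
      exact b.orthonormal.ne_zero i (by ext l; exact congrFun hf l)
    · funext l
      exact congrFun (hN.mulVec_eigenvectorBasis i) l
  set k := Y.rank with hk
  set d := r - k with hd
  have hd1 : 1 ≤ d := by omega
  have hrn : r ≤ n := by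
    have := M.rank_le_card_width
    simp only [Fintype.card_fin] at this
    omega
  -- the span of eigenvectors with nonzero eigenvalue
  set T : Submodule ℝ (EuclideanSpace ℝ (Fin n)) :=
    Submodule.span ℝ (Set.range (fun i : {i // μe i ≠ 0} => b i)) with hT
  have hLI : LinearIndependent ℝ (fun i : {i // μe i ≠ 0} => b i) :=
    b.orthonormal.linearIndependent.comp Subtype.val Subtype.val_injective
  have hTdim : Module.finrank ℝ T = r := by
    rw [hT, finrank_span_eq_card hLI]
    have h1 := hN.rank_eq_card_non_zero_eigs
    rw [Matrix.rank_transpose_mul_self, hr] at h1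
    exact h1.symm
  -- kernel of Y
  set L : EuclideanSpace ℝ (Fin n) →ₗ[ℝ] (Fin m → ℝ) :=
    Y.mulVecLin ∘ₗ (WithLp.linearEquiv 2 ℝ (Fin n → ℝ)).toLinearMap with hL
  have hrange : LinearMap.range L = LinearMap.range Y.mulVecLin := by
    rw [hL, LinearMap.range_comp_of_range_eq_top _ (LinearEquiv.range _)]
  have hkdim : Module.finrank ℝ (LinearMap.ker L) = n - k := by
    have h1 := LinearMap.finrank_range_add_finrank_ker L
    rw [hrange] at h1
    have h2 : Module.finrank ℝ (LinearMap.range Y.mulVecLin) = k := rfl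
    rw [h2, finrank_euclideanSpace_fin] at h1
    omega
  set W' : Submodule ℝ (EuclideanSpace ℝ (Fin n)) := T ⊓ LinearMap.ker L with hW'
  have hWdim : d ≤ Module.finrank ℝ W' := by
    show d ≤ Module.finrank ℝ ↥(T ⊓ LinearMap.ker L)
    have h1 := Submodule.finrank_sup_add_finrank_inf_eq T (LinearMap.ker L)
    have h2 : Module.finrank ℝ ↥(T ⊔ LinearMap.ker L) ≤ n := by
      have := Submodule.finrank_le (T ⊔ LinearMap.ker L)
      rwa [finrank_euclideanSpace_fin] at this
    have hkn : k ≤ n := by omega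
    rw [hTdim, hkdim] at h1
    omega
  set onb := stdOrthonormalBasis ℝ W' with honb
  set w : Fin d → EuclideanSpace ℝ (Fin n) :=
    fun l => ((onb (Fin.castLE hWdim l)) : EuclideanSpace ℝ (Fin n)) with hw
  have horm : ∀ l l', (inner ℝ (w l) (w l') : ℝ) = if l = l' then 1 else 0 := by
    intro l l'
    have h := orthonormal_iff_ite.mp onb.orthonormal (Fin.castLE hWdim l) (Fin.castLE hWdim l')
    rw [Submodule.coe_inner] at h
    rw [hw]
    simp only [h]
    congr 1
    simp [Fin.castLE_inj]
  have hwT : ∀ l, w l ∈ T := fun l => (Submodule.mem_inf.mp (SetLike.coe_mem (onb (Fin.castLE hWdim l)))).1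
  have hwK : ∀ l, Y.mulVec (fun j => (w l) j) = 0 := by
    intro l
    have h1 := (Submodule.mem_inf.mp (SetLike.coe_mem (onb (Fin.castLE hWdim l)))).2
    rw [LinearMap.mem_ker] at h1
    exact h1
  -- orthogonality to zero-eigenvalue eigenvectors
  have hperp : ∀ (x : EuclideanSpace ℝ (Fin n)), x ∈ T → ∀ i, μe i = 0 →
      (inner ℝ (b i) x : ℝ) = 0 := by
    intro x hx i hi
    induction hx using Submodule.span_induction with
    | mem y hy =>
        obtain ⟨i', rfl⟩ := hy
        have hii' : i ≠ (i' : Fin n) := by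
          intro hcon
          exact i'.2 (by rw [← hcon]; exact hi)
        exact orthonormal_iff_ite.mp b.orthonormal i i' ▸ by simp [hii']
    | zero => simp
    | add y z _ _ hy hz => rw [inner_add_right, hy, hz, add_zero]
    | smul c y _ hy => rw [inner_smul_right, hy, mul_zero]
  -- each column gives at least s
  have hcol : ∀ l, s ≤ ∑ i, (((Y - M).mulVec (fun j => (w l) j)) i)^2 := by
    intro l
    have hunit : ∑ j, ((w l) j)^2 = 1 := by
      have h := horm l l
      rw [euc_inner_eq] at h
      simp only [if_true, eq_self_iff_true] at h
      rw [← h]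
      apply Finset.sum_congr rfl; intro j _; ring
    have hq := quadform_lower (Mᵀ * M) hN s hnn hlowe (fun j => (w l) j) ?_
    · have hdm := dot_MtM M (fun j => (w l) j)
      rw [hdm] at hq
      rw [hunit, mul_one] at hq
      have hYM : ∀ i, ((Y - M).mulVec (fun j => (w l) j)) i = -((M.mulVec (fun j => (w l) j)) i) := by
        intro i
        rw [Matrix.sub_mulVec, hwK l]
        simp
      calc s ≤ ∑ i, ((M.mulVec (fun j => (w l) j)) i)^2 := hq
        _ = ∑ i, (((Y - M).mulVec (fun j => (w l) j)) i)^2 := by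
            apply Finset.sum_congr rfl; intro i _; rw [hYM i]; ring
    · intro i hi
      have h := hperp (w l) (hwT l) i hi
      rw [euc_inner_eq] at h
      exact h
  -- assemble via the orthonormal matrix
  set Wmat : Matrix (Fin n) (Fin d) ℝ := Matrix.of (fun j l => (w l) j) with hWmat
  have hWW : Wmatᵀ * Wmat = 1 := by
    ext l l'
    rw [Matrix.mul_apply, Matrix.one_apply]
    have h := horm l l'
    rw [euc_inner_eq] at h
    simpa [hWmat] using h
  have h1 : ((d : ℝ)) * s ≤ fnorm ((Y - M) * Wmat) ^ 2 := by
    rw [fnorm_mul_sq_eq_sum_cols]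
    calc ((d : ℝ)) * s = ∑ _l : Fin d, s := by rw [Finset.sum_const]; simp [mul_comm]
      _ ≤ ∑ l, ∑ i, (((Y - M).mulVec (fun j => Wmat j l)) i)^2 := by
          apply Finset.sum_le_sum
          intro l _
          exact hcol l
  have h2 := fnorm_mul_orthonormal_le (Y - M) Wmat hWW
  have h3 : ((r : ℝ) - (k : ℝ)) = (d : ℝ) := by
    rw [hd]
    push_cast [Nat.cast_sub (le_of_lt hY)]
    ring
  rw [h3]
  linarith




lemma eig_transport {m n : ℕ} (M : Matrix (Fin m) (Fin n) ℝ) (v : Fin n → ℝ) (μ : ℝ)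
    (hμ : μ ≠ 0) (hv : v ≠ 0) (heq : (Mᵀ * M).mulVec v = μ • v) :
    ∃ u : Fin m → ℝ, u ≠ 0 ∧ (M * Mᴴ).mulVec u = μ • u := by
  refine ⟨M.mulVec v, ?_, ?_⟩
  · intro h0
    have h1 : (Mᵀ * M).mulVec v = 0 := by
      rw [← Matrix.mulVec_mulVec, h0, Matrix.mulVec_zero]
    rw [heq] at h1
    apply hv
    have := congrArg (fun z => μ⁻¹ • z) h1
    simpa [smul_smul, inv_mul_cancel₀ hμ] using this
  · rw [Matrix.conjTranspose_eq_transpose_of_trivial]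
    rw [← Matrix.mulVec_mulVec, Matrix.mulVec_mulVec v Mᵀ M, heq, Matrix.mulVec_smul]

-- nonzero columns of a matrix whose rank equals its number of nonzero columns
-- are "independent": any kernel vector vanishes there
lemma ker_vanish_on_support {m κ r : ℕ} (Ub : Matrix (Fin m) (Fin κ) ℝ)
    (hge : r ≤ Ub.rank) (hl20 : l20 Ub = r)
    (z : Fin κ → ℝ) (hz : Ub.mulVec z = 0) :
    ∀ j, (fun i => Ub i j) ≠ 0 → z j = 0 := by
  classical
  set sF : Finset (Fin κ) := Finset.univ.filter (fun j => (fun i => Ub i j) ≠ 0) with hsF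
  have hcards : sF.card = r := by
    rw [← hl20, l20]
    rw [show {j : Fin κ | (fun i => Ub i j) ≠ 0} = ↑sF by ext j; simp [hsF]]
    rw [Set.ncard_coe_finset]
  -- the restricted column family
  set fam : {j // j ∈ sF} → (Fin m → ℝ) := fun j => Ubᵀ j.1 with hfam
  have hspan : Submodule.span ℝ (Set.range fam) = Submodule.span ℝ (Set.range Ubᵀ) := by
    apply le_antisymm
    · apply Submodule.span_mono
      rintro y ⟨j, rfl⟩
      exact ⟨j.1, rfl⟩
    · rw [Submodule.span_le]
      rintro y ⟨j, rfl⟩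
      by_cases hj : j ∈ sF
      · exact Submodule.subset_span ⟨⟨j, hj⟩, rfl⟩
      · have : Ubᵀ j = 0 := by
          simp only [hsF, Finset.mem_filter, Finset.mem_univ, true_and, not_not] at hj
          funext i
          exact congrFun hj i
        rw [this]
        exact Submodule.zero_mem _
  have hrank : Ub.rank = Module.finrank ℝ (Submodule.span ℝ (Set.range fam)) := by
    rw [hspan, Matrix.rank_eq_finrank_span_cols]; rfl
  have hLI : LinearIndependent ℝ fam := by
    rw [linearIndependent_iff_card_eq_finrank_span]
    have hle : (Set.range fam).finrank ℝ ≤ sF.card := by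
      have := finrank_range_le_card (R := ℝ) fam
      simpa [Fintype.card_coe] using this
    have hfr : (Set.range fam).finrank ℝ = Module.finrank ℝ (Submodule.span ℝ (Set.range fam)) := rfl
    have hge2 : r ≤ (Set.range fam).finrank ℝ := by
      rw [hfr, ← hrank]
      exact hge
    rw [Fintype.card_coe]
    rw [hcards]
    have : (Set.range fam).finrank ℝ = r := le_antisymm (by rw [hcards] at hle; exact hle) hge2
    rw [this]
  intro j hj
  have hjs : j ∈ sF := by simp [hsF, hj]
  -- mulVec as a linear combination of columns
  have hcomb : ∑ j' ∈ sF, z j' • Ubᵀ j' = 0 := by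
    have h1 : ∑ j' : Fin κ, z j' • Ubᵀ j' = 0 := by
      funext i
      have := congrFun hz i
      simp only [Matrix.mulVec, dotProduct] at this
      rw [← this]
      simp [Matrix.transpose_apply, Finset.sum_apply, mul_comm]
    have h2 : ∑ j' ∈ sF, z j' • Ubᵀ j' = ∑ j' : Fin κ, z j' • Ubᵀ j' := by
      apply Finset.sum_subset (Finset.subset_univ sF)
      intro j' _ hj'
      simp only [hsF, Finset.mem_filter, Finset.mem_univ, true_and, not_not] at hj'
      have : Ubᵀ j' = 0 := by funext i; exact congrFun hj' i
      rw [this, smul_zero]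
    rw [h2, h1]
  have hsum : ∑ j' : {j' // j' ∈ sF}, z j'.1 • fam j' = 0 := by
    rw [← hcomb]
    rw [← Finset.sum_coe_sort sF (fun j' => z j' • Ubᵀ j')]
  have := Fintype.linearIndependent_iff.mp hLI (fun j' => z j'.1) hsum ⟨j, hjs⟩
  exact this



/-- near a global minimizer in `𝒲*`, sublevel points have the same set of
nonzero columns (Lemma 4.2). -/
theorem stable_support_near_global_min
    {m n p : ℕ} (A : Matrix (Fin m) (Fin n) ℝ →ₗ[ℝ] (Fin p → ℝ))
    (M : Matrix (Fin m) (Fin n) ℝ) (r : ℕ) (hr : M.rank = r) (hr1 : 1 ≤ r)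
    (ν μ : ℝ) (hν : 0 < ν) (hμ : 0 < μ) (κ : ℕ) (hκ : 1 ≤ κ)
    (f : Matrix (Fin m) (Fin n) ℝ → ℝ)
    (hf : ∀ X : Matrix (Fin m) (Fin n) ℝ, f X = (1 / 2) * (vnorm (A X - A M)) ^ 2)
    (hne : ∃ X0 : Matrix (Fin m) (Fin n) ℝ,
      (∀ X : Matrix (Fin m) (Fin n) ℝ,
        ν * f X0 + (X0.rank : ℝ) ≤ ν * f X + (X.rank : ℝ)) ∧ X0.rank ≤ κ)
    (hα : 2 / (ν * (singularValue r M) ^ 2) < lamMin A (2 * r))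
    (Ubar : Matrix (Fin m) (Fin κ) ℝ) (Vbar : Matrix (Fin n) (Fin κ) ℝ)
    (hWmem : (∀ X : Matrix (Fin m) (Fin n) ℝ,
        ν * f (Ubar * Vbarᵀ) + ((Ubar * Vbarᵀ).rank : ℝ) ≤ ν * f X + (X.rank : ℝ)) ∧
      (Ubar * Vbarᵀ).rank ≤ κ ∧ Ubarᵀ * Ubar = Vbarᵀ * Vbar ∧
      l20 Ubar = (Ubar * Vbarᵀ).rank ∧ l20 Vbar = (Ubar * Vbarᵀ).rank)
    (U : Matrix (Fin m) (Fin κ) ℝ) (V : Matrix (Fin n) (Fin κ) ℝ)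
    (hdist : Real.sqrt ((fnorm (U - Ubar)) ^ 2 + (fnorm (V - Vbar)) ^ 2) <
      Real.sqrt (singularValue r M) / 4)
    (hval0 : 0 < Psi f ν μ U V - Psi f ν μ Ubar Vbar)
    (hval1 : Psi f ν μ U V - Psi f ν μ Ubar Vbar < 1 / 2) :
    {j : Fin κ | (fun i => Ubar i j) ≠ 0} = {j : Fin κ | (fun i => Vbar i j) ≠ 0} ∧
    {j : Fin κ | (fun i => Ubar i j) ≠ 0} = {j : Fin κ | (fun i => U i j) ≠ 0} ∧
    {j : Fin κ | (fun i => Ubar i j) ≠ 0} = {j : Fin κ | (fun i => V i j) ≠ 0} := by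
  classical
  set s := singularValue r M with hsdef
  obtain ⟨hs2pos, hmin_eig⟩ := singularValue_key M hr hr1
  rw [← hsdef] at hs2pos hmin_eig
  have hs0 : 0 ≤ s := by
    rw [hsdef, singularValue]
    split
    · exact Real.sqrt_nonneg _
    · exact le_rfl
  have hspos : 0 < s := by
    rcases lt_or_eq_of_le hs0 with h | h
    · exact h
    · exfalso; rw [← h] at hs2pos; simp at hs2pos
  have halpha : 0 < lamMin A (2 * r) := by
    refine lt_of_le_of_lt ?_ hα
    apply div_nonneg (by norm_num)
    positivity
  have hαs : 2 < ν * lamMin A (2 * r) * s ^ 2 := by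
    have h1 := (div_lt_iff₀ (by positivity : (0:ℝ) < ν * s ^ 2)).mp hα
    nlinarith
  -- basic facts about f
  have hf0 : f M = 0 := by
    rw [hf]
    have : vnorm (A M - A M) = 0 := by simp [vnorm]
    rw [this]
    ring
  have hfnn : ∀ X, 0 ≤ f X := by intro X; rw [hf]; positivity
  -- the factored matrix
  set Mb := Ubar * Vbarᵀ with hMbdef
  have key1 : ν * f Mb + (Mb.rank : ℝ) ≤ (r : ℝ) := by
    have := hWmem.1 M
    rw [hf0, hr] at this
    simpa using this
  have hrb_le : Mb.rank ≤ r := by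
    have h1 : (Mb.rank : ℝ) ≤ (r : ℝ) := by
      have := mul_nonneg hν.le (hfnn Mb)
      linarith
    exact_mod_cast h1
  -- eigenvalue lower bound for MᵀM
  have hlowEY : ∀ (v : Fin n → ℝ) (μ' : ℝ), v ≠ 0 → μ' ≠ 0 →
      (Mᵀ * M).mulVec v = μ' • v → s ^ 2 ≤ μ' := by
    intro v μ' hv hμ' heq
    obtain ⟨u, hu, hequ⟩ := eig_transport M v μ' hμ' hv heq
    obtain ⟨i, hi⟩ := exists_eig_index (M * Mᴴ)
      (Matrix.isHermitian_mul_conjTranspose_self M) u hu μ' hequ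
    rw [← hi]
    exact hmin_eig i (by rw [hi]; exact hμ')
  -- rank of Mb equals r
  have hrbr : Mb.rank = r := by
    rcases lt_or_ge Mb.rank r with hlt | hge
    · exfalso
      have hEY := eckart_young M Mb hr (s ^ 2) (sq_nonneg s) hlowEY hlt
      have hrksub : (Mb - M).rank ≤ 2 * r := by
        have := rank_sub_le Mb M
        rw [hr] at this
        omega
      have hres := lamMin_mul_le A (2 * r) (Mb - M) hrksub
      have hfMb : ν * f Mb ≤ (r : ℝ) - (Mb.rank : ℝ) := by linarith
      have hfMb2 : f Mb = (1/2) * (vnorm (A (Mb - M))) ^ 2 := by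
        rw [hf, map_sub]
      have hDge : (1 : ℝ) ≤ (r : ℝ) - (Mb.rank : ℝ) := by
        have : (Mb.rank : ℝ) + 1 ≤ (r : ℝ) := by exact_mod_cast hlt
        linarith
      set D : ℝ := (r : ℝ) - (Mb.rank : ℝ)
      set F : ℝ := fnorm (Mb - M) ^ 2
      set Vq : ℝ := (vnorm (A (Mb - M))) ^ 2
      have hF0 : 0 ≤ F := sq_nonneg _
      have hV0 : 0 ≤ Vq := sq_nonneg _
      clear_value D F Vq
      -- hEY : D * s^2 ≤ F, hres : lamMin * F ≤ Vq, ν (1/2) Vq ≤ D, 2 < ν lamMin s²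
      have c1 : ν * Vq ≤ 2 * D := by
        rw [hfMb2] at hfMb
        have h' : ν * (1 / 2 * Vq) = ν * Vq / 2 := by ring
        rw [h'] at hfMb
        linarith
      have c2 : ν * lamMin A (2*r) * F ≤ ν * Vq := by
        have := mul_le_mul_of_nonneg_left hres hν.le
        calc ν * lamMin A (2*r) * F = ν * (lamMin A (2*r) * F) := by ring
          _ ≤ ν * Vq := this
      have c3 : ν * lamMin A (2*r) * (D * s ^ 2) ≤ ν * lamMin A (2*r) * F :=
        mul_le_mul_of_nonneg_left hEY (mul_nonneg hν.le halpha.le)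
      have hDpos : (0:ℝ) < D := by linarith
      have c5 : 2 * D < (ν * lamMin A (2*r) * s ^ 2) * D :=
        (mul_lt_mul_of_pos_right hαs hDpos).trans_eq (by ring)
      have c6 : (ν * lamMin A (2*r) * s ^ 2) * D = ν * lamMin A (2*r) * (D * s ^ 2) := by ring
      linarith
    · exact le_antisymm hrb_le hge
  -- f vanishes at Mb, hence Mb = M
  have hfMb0 : f Mb = 0 := by
    have h1 : ν * f Mb ≤ 0 := by
      rw [hrbr] at key1
      linarith
    have h2 : ν * f Mb ≤ ν * 0 := by simpa using h1
    exact le_antisymm ((mul_le_mul_iff_right₀ hν).mp h2) (hfnn Mb)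
  have hAdiff : A (Mb - M) = 0 := by
    have h1 : vnorm (A Mb - A M) = 0 := by
      rw [hf] at hfMb0
      have h2 : (vnorm (A Mb - A M)) ^ 2 = 0 := by linarith
      exact sq_eq_zero_iff.mp h2
    rw [map_sub]
    exact (vnorm_eq_zero_iff _).mp h1
  have hMbM : Mb = M := by
    have hrksub : (Mb - M).rank ≤ 2 * r := by
      have := rank_sub_le Mb M
      rw [hr, hrbr] at this
      omega
    have hres := lamMin_mul_le A (2 * r) (Mb - M) hrksub
    rw [hAdiff] at hres
    have h2 : vnorm (0 : Fin p → ℝ) = 0 := by simp [vnorm]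
    rw [h2] at hres
    have h3 : fnorm (Mb - M) ^ 2 ≤ 0 := by nlinarith
    have h4 : fnorm (Mb - M) = 0 :=
      sq_eq_zero_iff.mp (le_antisymm h3 (sq_nonneg _))
    have h5 := (fnorm_eq_zero_iff _).mp h4
    rwa [sub_eq_zero] at h5
  -- the Gram matrix
  set G := Ubarᵀ * Ubar with hGdef
  have hbal : Ubarᵀ * Ubar = Vbarᵀ * Vbar := hWmem.2.2.1
  have hGdU : ∀ j, G j j = ∑ i, (Ubar i j) ^ 2 := by
    intro j
    rw [hGdef, Matrix.mul_apply]
    apply Finset.sum_congr rfl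
    intro i _
    rw [Matrix.transpose_apply]
    ring
  have hGdV : ∀ j, G j j = ∑ i, (Vbar i j) ^ 2 := by
    intro j
    rw [hGdef, hbal, Matrix.mul_apply]
    apply Finset.sum_congr rfl
    intro i _
    rw [Matrix.transpose_apply]
    ring
  have hl20U : l20 Ubar = r := by rw [hWmem.2.2.2.1, hrbr]
  have hl20V : l20 Vbar = r := by rw [hWmem.2.2.2.2, hrbr]
  have hrkU : r ≤ Ubar.rank := by
    have := Matrix.rank_mul_le_left Ubar Vbarᵀ
    rw [← hMbdef, hrbr] at this
    exact this
  have hGh : G.IsHermitian := by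
    have h := Matrix.isHermitian_conjTranspose_mul_self Ubar
    rwa [Matrix.conjTranspose_eq_transpose_of_trivial] at h
  have hGnn : ∀ i, 0 ≤ hGh.eigenvalues i := by
    intro i
    have hpsd : G.PosSemidef := by
      have h := Matrix.posSemidef_conjTranspose_mul_self Ubar
      rwa [Matrix.conjTranspose_eq_transpose_of_trivial] at h
    exact hpsd.eigenvalues_nonneg i
  -- nonzero eigenvalues of G are at least s
  have hGlow : ∀ i, hGh.eigenvalues i ≠ 0 → s ≤ hGh.eigenvalues i := by
    intro i hi
    set lam := hGh.eigenvalues i with hlam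
    set v : Fin κ → ℝ := fun l => (hGh.eigenvectorBasis i) l with hv
    have hveq : G.mulVec v = lam • v := by
      funext l
      exact congrFun (hGh.mulVec_eigenvectorBasis i) l
    have hvunit : ∑ l, (v l) ^ 2 = 1 := by
      have h := orthonormal_iff_ite.mp (hGh.eigenvectorBasis).orthonormal i i
      rw [euc_inner_eq] at h
      simp only [if_true, eq_self_iff_true] at h
      rw [← h]
      apply Finset.sum_congr rfl
      intro l _
      ring
    have hvne : v ≠ 0 := by
      intro hcon
      apply (hGh.eigenvectorBasis).orthonormal.ne_zero i
      ext l
      exact congrFun hcon l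
    have hlampos : 0 < lam := lt_of_le_of_ne (hGnn i) (Ne.symm hi)
    set u : Fin m → ℝ := Ubar.mulVec v with hu
    have husq : ∑ i', (u i') ^ 2 = lam := by
      rw [hu, ← dot_MtM Ubar v, ← hGdef, hveq]
      calc ∑ j, v j * (lam • v) j = lam * ∑ j, (v j) ^ 2 := by
            rw [Finset.mul_sum]
            apply Finset.sum_congr rfl
            intro l _
            simp [Pi.smul_apply]
            ring
        _ = lam := by rw [hvunit, mul_one]
    have hune : u ≠ 0 := by
      intro hcon
      apply hi
      rw [← husq, hcon]
      simp
    -- (M Mᴴ) u = lam² u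
    have hMM : M * Mᴴ = Ubar * (G * Ubarᵀ) := by
      rw [← hMbM, hMbdef, Matrix.conjTranspose_eq_transpose_of_trivial,
        Matrix.transpose_mul, Matrix.transpose_transpose]
      rw [hGdef, hbal]
      rw [Matrix.mul_assoc, ← Matrix.mul_assoc Vbarᵀ Vbar Ubarᵀ]
    have heig2 : (M * Mᴴ).mulVec u = (lam ^ 2) • u := by
      rw [hMM]
      rw [← Matrix.mulVec_mulVec]
      rw [← Matrix.mulVec_mulVec]
      rw [hu]
      rw [Matrix.mulVec_mulVec v Ubarᵀ Ubar, ← hGdef, hveq]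
      rw [Matrix.mulVec_smul, hveq]
      rw [smul_smul, ← Matrix.mulVec_smul]
      congr 1
      rw [sq]
    obtain ⟨i0, hi0⟩ := exists_eig_index (M * Mᴴ)
      (Matrix.isHermitian_mul_conjTranspose_self M) u hune (lam ^ 2) heig2
    have hs2 : s ^ 2 ≤ lam ^ 2 := by
      rw [← hi0]
      exact hmin_eig i0 (by rw [hi0]; positivity)
    by_contra hcon
    push_neg at hcon
    have hlt2 : lam ^ 2 < s ^ 2 := pow_lt_pow_left₀ hcon (hGnn i) (by norm_num)
    exact absurd hs2 (not_le.mpr hlt2)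
  -- the diagonal entries of G on the support are at least s
  have hGcol : ∀ j, (fun i => Ubar i j) ≠ 0 → s ≤ G j j := by
    intro j hj
    have hx0 : ∀ i, hGh.eigenvalues i = 0 →
        ∑ l, (hGh.eigenvectorBasis i) l * (Pi.single j 1 : Fin κ → ℝ) l = 0 := by
      intro i hi0
      set v : Fin κ → ℝ := fun l => (hGh.eigenvectorBasis i) l with hv
      have hGv0 : G.mulVec v = 0 := by
        funext l
        have h := congrFun (hGh.mulVec_eigenvectorBasis i) l
        rw [hi0] at h
        simpa using h
      have hUv0 : Ubar.mulVec v = 0 := by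
        have h1 : ∑ i', ((Ubar.mulVec v) i') ^ 2 = 0 := by
          rw [← dot_MtM Ubar v, ← hGdef, hGv0]
          simp
        exact (sumsq_eq_zero_iff _).mp h1
      have hvj := ker_vanish_on_support Ubar hrkU hl20U v hUv0 j hj
      calc ∑ l, (hGh.eigenvectorBasis i) l * (Pi.single j 1 : Fin κ → ℝ) l
          = v j := by
            rw [Finset.sum_eq_single j]
            · simp [hv]
            · intro l _ hl
              simp [Pi.single_apply, hl]
            · intro h
              exact absurd (Finset.mem_univ j) h
        _ = 0 := hvj
    have hq := quadform_lower G hGh s hGnn hGlow (Pi.single j 1) hx0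
    have h1 : ∑ l, ((Pi.single j 1 : Fin κ → ℝ) l) ^ 2 = 1 := by
      rw [Finset.sum_eq_single j]
      · simp
      · intro l _ hl
        simp [Pi.single_apply, hl]
      · intro h
        exact absurd (Finset.mem_univ j) h
    have h2 : ∑ l, (Pi.single j 1 : Fin κ → ℝ) l * (G.mulVec (Pi.single j 1)) l
        = G j j := by
      rw [Finset.sum_eq_single j]
      · simp [Matrix.mulVec, dotProduct, Pi.single_apply]
      · intro l _ hl
        simp [Pi.single_apply, hl]
      · intro h
        exact absurd (Finset.mem_univ j) h
    rw [h1, h2, mul_one] at hq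
    exact hq
  -- supports of Ubar and Vbar coincide
  have hsupp_eq : ∀ j, ((fun i => Ubar i j) ≠ 0 ↔ (fun i => Vbar i j) ≠ 0) := by
    intro j
    rw [not_iff_not]
    constructor
    · intro h
      apply (sumsq_eq_zero_iff (fun i => Vbar i j)).mp
      rw [← hGdV, hGdU]
      apply (sumsq_eq_zero_iff (fun i => Ubar i j)).mpr h
    · intro h
      apply (sumsq_eq_zero_iff (fun i => Ubar i j)).mp
      rw [← hGdU, hGdV]
      apply (sumsq_eq_zero_iff (fun i => Vbar i j)).mpr h
  -- distance bound
  have hdistsq : fnorm (U - Ubar) ^ 2 + fnorm (V - Vbar) ^ 2 < s / 16 := by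
    have hab : 0 ≤ fnorm (U - Ubar) ^ 2 + fnorm (V - Vbar) ^ 2 := by positivity
    have h1 : Real.sqrt (fnorm (U - Ubar) ^ 2 + fnorm (V - Vbar) ^ 2) ^ 2 <
        (Real.sqrt s / 4) ^ 2 := by
      apply pow_lt_pow_left₀ hdist (Real.sqrt_nonneg _)
      norm_num
    rw [Real.sq_sqrt hab] at h1
    have h2 : (Real.sqrt s / 4) ^ 2 = s / 16 := by
      rw [div_pow, Real.sq_sqrt hs0]
      norm_num
    rw [h2] at h1
    exact h1
  -- support inclusions
  have hUincl : ∀ j, (fun i => Ubar i j) ≠ 0 → (fun i => U i j) ≠ 0 := by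
    intro j hj hU0
    have h1 : ∑ i, ((U - Ubar) i j) ^ 2 = ∑ i, (Ubar i j) ^ 2 := by
      apply Finset.sum_congr rfl
      intro i _
      have : (U - Ubar) i j = - Ubar i j := by
        rw [Matrix.sub_apply]
        rw [show U i j = 0 from congrFun hU0 i]
        ring
      rw [this]
      ring
    have h2 : s ≤ ∑ i, ((U - Ubar) i j) ^ 2 := by
      rw [h1, ← hGdU]
      exact hGcol j hj
    have h3 : ∑ i, ((U - Ubar) i j) ^ 2 ≤ fnorm (U - Ubar) ^ 2 :=
      colsq_le_fnorm_sq _ j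
    have h4 : (0:ℝ) ≤ fnorm (V - Vbar) ^ 2 := sq_nonneg _
    linarith
  have hVincl : ∀ j, (fun i => Vbar i j) ≠ 0 → (fun i => V i j) ≠ 0 := by
    intro j hj hV0
    have hjU : (fun i => Ubar i j) ≠ 0 := (hsupp_eq j).mpr hj
    have h1 : ∑ i, ((V - Vbar) i j) ^ 2 = ∑ i, (Vbar i j) ^ 2 := by
      apply Finset.sum_congr rfl
      intro i _
      have : (V - Vbar) i j = - Vbar i j := by
        rw [Matrix.sub_apply]
        rw [show V i j = 0 from congrFun hV0 i]
        ring
      rw [this]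
      ring
    have h2 : s ≤ ∑ i, ((V - Vbar) i j) ^ 2 := by
      rw [h1, ← hGdV]
      exact hGcol j hjU
    have h3 : ∑ i, ((V - Vbar) i j) ^ 2 ≤ fnorm (V - Vbar) ^ 2 :=
      colsq_le_fnorm_sq _ j
    have h4 : (0:ℝ) ≤ fnorm (U - Ubar) ^ 2 := sq_nonneg _
    linarith
  -- counting
  have hPsiUb : Psi f ν μ Ubar Vbar = (r : ℝ) := by
    rw [Psi]
    rw [← hMbdef, hMbM, hf0]
    rw [show Ubarᵀ * Ubar - Vbarᵀ * Vbar = 0 by rw [hbal, sub_self]]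
    rw [show fnorm (0 : Matrix (Fin κ) (Fin κ) ℝ) = 0 by simp [fnorm]]
    rw [hl20U, hl20V]
    ring
  have hPsiLB : (1/2 : ℝ) * ((l20 U : ℝ) + (l20 V : ℝ)) ≤ Psi f ν μ U V := by
    rw [Psi]
    have h1 : 0 ≤ ν * f (U * Vᵀ) := mul_nonneg hν.le (hfnn _)
    have h2 : 0 ≤ (μ / 4) * (fnorm (Uᵀ * U - Vᵀ * V)) ^ 2 := by positivity
    linarith
  have hcount : l20 U + l20 V ≤ 2 * r := by
    have h1 : (1/2 : ℝ) * ((l20 U : ℝ) + (l20 V : ℝ)) < (r : ℝ) + 1/2 := by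
      rw [hPsiUb] at hval1
      linarith
    have h2 : ((l20 U : ℝ) + (l20 V : ℝ)) < 2 * (r:ℝ) + 1 := by linarith
    have h3 : ((l20 U + l20 V : ℕ) : ℝ) < ((2 * r + 1 : ℕ) : ℝ) := by push_cast; linarith
    have h4 := Nat.cast_lt.mp h3
    omega
  -- final set equalities
  set SUb := {j : Fin κ | (fun i => Ubar i j) ≠ 0} with hSUb
  set SVb := {j : Fin κ | (fun i => Vbar i j) ≠ 0} with hSVb
  set SU := {j : Fin κ | (fun i => U i j) ≠ 0} with hSU
  set SV := {j : Fin κ | (fun i => V i j) ≠ 0} with hSV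
  have hE1 : SUb = SVb := by
    ext j
    exact hsupp_eq j
  have hsubU : SUb ⊆ SU := fun j hj => hUincl j hj
  have hsubV : SVb ⊆ SV := fun j hj => hVincl j hj
  have hcardUb : SUb.ncard = r := hl20U
  have hcardVb : SVb.ncard = r := hl20V
  have hcardU_ge : r ≤ SU.ncard := by
    rw [← hcardUb]
    exact Set.ncard_le_ncard hsubU (Set.toFinite _)
  have hcardV_ge : r ≤ SV.ncard := by
    rw [← hcardVb]
    exact Set.ncard_le_ncard hsubV (Set.toFinite _)
  have hcardsum : SU.ncard + SV.ncard ≤ 2 * r := hcount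
  have hcardU : SU.ncard = r := by omega
  have hcardV : SV.ncard = r := by omega
  have hE2 : SUb = SU := by
    apply Set.eq_of_subset_of_ncard_le hsubU _ (Set.toFinite _)
    rw [hcardU, hcardUb]
  have hE3 : SUb = SV := by
    rw [hE1]
    apply Set.eq_of_subset_of_ncard_le hsubV _ (Set.toFinite _)
    rw [hcardV, hcardVb]
  exact ⟨hE1, hE2, hE3⟩


end Paper
end
end

section
/- Let a > 1 and φ(t) = ((a−1)/(a+1))t² + (2/(a+1))t for t ∈ ℝ. Let ψ(t) = φ(t) for t ∈ [0,1] and ψ(t) = +∞ otherwise, and let ψ*(s) = sup_{t∈ℝ}(st − ψ(t)) be its conjugate. Then for all s ∈ ℝ: ψ*(s) = 0 if s ≤ 2/(a+1); ψ*(s) = ((a+1)s − 2)²/(4(a² − 1)) if 2/(a+1) < s ≤ 2a/(a+1); and ψ*(s) = s − 1 if s > 2a/(a+1). -/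
open scoped BigOperators

noncomputable section

namespace Paper

open Matrix

private lemma sup_formula_aux (φ : ℝ → ℝ) (ψ : ℝ → EReal)
    (hψ : ∀ t : ℝ, ψ t = if t ∈ Set.Icc (0 : ℝ) 1 then ((φ t : ℝ) : EReal) else ⊤)
    (s V t₀ : ℝ) (ht₀ : t₀ ∈ Set.Icc (0:ℝ) 1) (hval : s * t₀ - φ t₀ = V)
    (hub : ∀ t ∈ Set.Icc (0:ℝ) 1, s * t - φ t ≤ V) :
    (⨆ t : ℝ, ((s * t : ℝ) : EReal) - ψ t) = ((V : ℝ) : EReal) := by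
  apply le_antisymm
  · apply iSup_le
    intro t
    rw [hψ t]
    by_cases h : t ∈ Set.Icc (0:ℝ) 1
    · simp only [h, if_true]
      rw [← EReal.coe_sub]
      exact_mod_cast hub t h
    · simp [h]
  · have h : ((V : ℝ) : EReal) = ((s * t₀ : ℝ) : EReal) - ψ t₀ := by
      rw [hψ t₀]; simp only [ht₀, if_true]
      rw [← EReal.coe_sub, hval]
    rw [h]
    exact le_iSup (fun t : ℝ => ((s * t : ℝ) : EReal) - ψ t) t₀

/-- explicit formula for the conjugate `ψ*` when
`φ(t) = ((a−1)/(a+1))t² + (2/(a+1))t` (formula (5.1)). -/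
theorem conjugate_of_quadratic_phi (a : ℝ) (ha : 1 < a)
    (φ : ℝ → ℝ) (hφ : ∀ t : ℝ, φ t = ((a - 1) / (a + 1)) * t ^ 2 + (2 / (a + 1)) * t)
    (ψ : ℝ → EReal)
    (hψ : ∀ t : ℝ, ψ t = if t ∈ Set.Icc (0 : ℝ) 1 then ((φ t : ℝ) : EReal) else ⊤)
    (ψs : ℝ → EReal) (hψs : ∀ s : ℝ, ψs s = ⨆ t : ℝ, ((s * t : ℝ) : EReal) - ψ t) :
    ∀ s : ℝ,
      (s ≤ 2 / (a + 1) → ψs s = 0) ∧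
      (2 / (a + 1) < s → s ≤ 2 * a / (a + 1) →
        ψs s = ((((a + 1) * s - 2) ^ 2 / (4 * (a ^ 2 - 1)) : ℝ) : EReal)) ∧
      (2 * a / (a + 1) < s → ψs s = ((s - 1 : ℝ) : EReal)) := by
  have ha1 : (0:ℝ) < a + 1 := by linarith
  have ha2 : (0:ℝ) < a - 1 := by linarith
  have hne1 : (a + 1 : ℝ) ≠ 0 := ne_of_gt ha1
  have hne2 : (a - 1 : ℝ) ≠ 0 := ne_of_gt ha2
  have hne3 : (a ^ 2 - 1 : ℝ) ≠ 0 := by nlinarith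
  have hcpos : (0:ℝ) < (a - 1) / (a + 1) := by positivity
  intro s
  refine ⟨?_, ?_, ?_⟩
  · intro hs
    rw [hψs s]
    have h := sup_formula_aux φ ψ hψ s 0 0 (by norm_num)
      (by rw [hφ]; ring)
      (fun t ht => by
        rw [hφ]
        nlinarith [mul_nonpos_of_nonneg_of_nonpos ht.1 (by linarith : s - 2/(a+1) ≤ 0),
          mul_nonneg hcpos.le (sq_nonneg t)])
    rw [h]; norm_num
  · intro hs1 hs2
    set t₀ : ℝ := ((a+1)*s - 2) / (2*(a-1)) with ht₀def
    set V : ℝ := ((a + 1) * s - 2) ^ 2 / (4 * (a ^ 2 - 1)) with hVdef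
    have hident : ∀ t : ℝ, V - (s * t - φ t) = ((a-1)/(a+1)) * (t - t₀)^2 := by
      intro t
      rw [hφ, hVdef, ht₀def]
      field_simp
      ring
    have h2s : 2 < (a + 1) * s := by
      rw [div_lt_iff₀ ha1] at hs1; linarith
    have hs2a : (a + 1) * s ≤ 2 * a := by
      rw [le_div_iff₀ ha1] at hs2; linarith
    have ht₀mem : t₀ ∈ Set.Icc (0:ℝ) 1 := by
      constructor
      · exact div_nonneg (by linarith) (by linarith)
      · rw [div_le_one (by linarith)]; linarith
    have hval : s * t₀ - φ t₀ = V := by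
      have h := hident t₀
      rw [sub_self] at h
      norm_num at h
      linarith
    rw [hψs s]
    exact sup_formula_aux φ ψ hψ s V t₀ ht₀mem hval
      (fun t ht => by
        have h := hident t
        nlinarith [mul_nonneg hcpos.le (sq_nonneg (t - t₀))])
  · intro hs
    have h2as : 2 * a < (a + 1) * s := by
      rw [div_lt_iff₀ ha1] at hs; linarith
    rw [hψs s]
    exact sup_formula_aux φ ψ hψ s (s - 1) 1 (by norm_num)
      (by rw [hφ]; field_simp; ring)
      (fun t ht => by
        have key : (s - 1) - (s * t - φ t)
            = (1 - t) * (((a+1)*s - (a-1)*(1+t) - 2)/(a+1)) := by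
          rw [hφ]; field_simp; ring
        have hnum : 0 ≤ ((a+1)*s - (a-1)*(1+t) - 2)/(a+1) :=
          div_nonneg (by nlinarith [ht.2]) ha1.le
        have := mul_nonneg (by linarith [ht.2] : (0:ℝ) ≤ 1 - t) hnum
        linarith)

end Paper
end
end
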